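/- Fix d ≥ 1 and permutations p_x, p_y of Fin d such that the subgroup of permutations generated by p_x and p_y acts transitively on Fin d. Then the subgroup generated by the M-Origami pair (m_A, m_B) associated to (p_x, p_y) acts transitively on (Fin 4) × (Fin d). -/

import Mathlib

/-- `m_A` of the M-Origami pair associated to `(p_x, p_y)`
(squares labelled `0,1,2,3` instead of `1,2,3,4`):
`m_A (0,j) = (1,j)`, `m_A (1,j) = (0, p_y j)`, `m_A (2,j) = (3,j)`, `m_A (3,j) = (2, p_y⁻¹ j)`. -/
def mOrigamiA {d : ℕ} (py : Equiv.Perm (Fin d)) : Equiv.Perm (Fin 4 × Fin d) :=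
  Equiv.prodShear (Equiv.swap 0 1 * Equiv.swap 2 3 : Equiv.Perm (Fin 4))
    (fun i => if i = 1 then py else if i = 3 then py⁻¹ else Equiv.refl (Fin d))

/-- `m_B` of the M-Origami pair associated to `(p_x, p_y)`:
`m_B (0,j) = (2,j)`, `m_B (1,j) = (3,j)`, `m_B (2,j) = (0, p_x⁻¹ j)`, `m_B (3,j) = (1, p_x j)`. -/
def mOrigamiB {d : ℕ} (px : Equiv.Perm (Fin d)) : Equiv.Perm (Fin 4 × Fin d) :=
  Equiv.prodShear (Equiv.swap 0 2 * Equiv.swap 1 3 : Equiv.Perm (Fin 4))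
    (fun i => if i = 2 then px⁻¹ else if i = 3 then px else Equiv.refl (Fin d))

lemma mA0 {d : ℕ} (py : Equiv.Perm (Fin d)) (j : Fin d) :
    mOrigamiA py (0, j) = (1, j) := by
  simp [mOrigamiA, Equiv.prodShear]; decide

lemma mA1 {d : ℕ} (py : Equiv.Perm (Fin d)) (j : Fin d) :
    mOrigamiA py (1, j) = (0, py j) := by
  simp [mOrigamiA, Equiv.prodShear]; decide

lemma mA2 {d : ℕ} (py : Equiv.Perm (Fin d)) (j : Fin d) :
    mOrigamiA py (2, j) = (3, j) := by
  simp [mOrigamiA, Equiv.prodShear]; decide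

lemma mB0 {d : ℕ} (px : Equiv.Perm (Fin d)) (j : Fin d) :
    mOrigamiB px (0, j) = (2, j) := by
  simp [mOrigamiB, Equiv.prodShear]; decide

lemma mB2 {d : ℕ} (px : Equiv.Perm (Fin d)) (j : Fin d) :
    mOrigamiB px (2, j) = (0, px⁻¹ j) := by
  simp [mOrigamiB, Equiv.prodShear]; decide

/-- If `⟨p_x, p_y⟩` acts transitively on `Fin d`, then the subgroup generated by the
M-Origami pair `(m_A, m_B)` acts transitively on `Fin 4 × Fin d`. -/
theorem mOrigami_transitive {d : ℕ} (hd : 1 ≤ d) (px py : Equiv.Perm (Fin d))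
    (htrans : ∀ i j : Fin d,
      ∃ g ∈ Subgroup.closure ({px, py} : Set (Equiv.Perm (Fin d))), g i = j) :
    ∀ p q : Fin 4 × Fin d,
      ∃ g ∈ Subgroup.closure ({mOrigamiA py, mOrigamiB px} : Set (Equiv.Perm (Fin 4 × Fin d))),
        g p = q := by
  set K := Subgroup.closure ({mOrigamiA py, mOrigamiB px} : Set (Equiv.Perm (Fin 4 × Fin d)))
  have hA : mOrigamiA py ∈ K := Subgroup.subset_closure (by simp)
  have hB : mOrigamiB px ∈ K := Subgroup.subset_closure (by simp)
  -- lift elements of closure {px, py} to K acting on the 0-row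
  have lift : ∀ g ∈ Subgroup.closure ({px, py} : Set (Equiv.Perm (Fin d))),
      ∃ G ∈ K, ∀ k : Fin d, G (0, k) = (0, g k) := by
    intro g hg
    induction hg using Subgroup.closure_induction with
    | mem x hx =>
      rcases hx with h | h
      · rw [h]
        refine ⟨(mOrigamiB px * mOrigamiB px)⁻¹, inv_mem (mul_mem hB hB), fun k => ?_⟩
        have h1 : (mOrigamiB px * mOrigamiB px) (0, px k) = (0, k) := by
          simp [Equiv.Perm.mul_apply, mB0, mB2]
        calc (mOrigamiB px * mOrigamiB px)⁻¹ (0, k)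
            = (mOrigamiB px * mOrigamiB px)⁻¹ ((mOrigamiB px * mOrigamiB px) (0, px k)) := by
              rw [h1]
          _ = (0, px k) := by rw [← Equiv.Perm.mul_apply, inv_mul_cancel, Equiv.Perm.one_apply]
      · rw [h]
        refine ⟨mOrigamiA py * mOrigamiA py, mul_mem hA hA, fun k => ?_⟩
        simp [Equiv.Perm.mul_apply, mA0, mA1]
    | one => exact ⟨1, one_mem _, fun k => rfl⟩
    | mul x y hx hy ihx ihy =>
      obtain ⟨G, hG, hGk⟩ := ihx
      obtain ⟨H, hH, hHk⟩ := ihy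
      exact ⟨G * H, mul_mem hG hH, fun k => by
        simp [Equiv.Perm.mul_apply, hHk, hGk]⟩
    | inv x hx ihx =>
      obtain ⟨G, hG, hGk⟩ := ihx
      refine ⟨G⁻¹, inv_mem hG, fun k => ?_⟩
      calc G⁻¹ (0, k) = G⁻¹ (G (0, x⁻¹ k)) := by rw [hGk, ← Equiv.Perm.mul_apply, mul_inv_cancel, Equiv.Perm.one_apply]
        _ = (0, x⁻¹ k) := by rw [← Equiv.Perm.mul_apply, inv_mul_cancel, Equiv.Perm.one_apply]
  -- every point is reachable from the 0-row
  have reach : ∀ p : Fin 4 × Fin d, ∃ G ∈ K, G (0, p.2) = p := by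
    rintro ⟨i, j⟩
    fin_cases i
    · exact ⟨1, one_mem _, rfl⟩
    · exact ⟨mOrigamiA py, hA, mA0 py j⟩
    · exact ⟨mOrigamiB px, hB, mB0 px j⟩
    · exact ⟨mOrigamiA py * mOrigamiB px, mul_mem hA hB, by
        simp [Equiv.Perm.mul_apply, mB0, mA2]⟩
  intro p q
  obtain ⟨P, hP, hPp⟩ := reach p
  obtain ⟨Q, hQ, hQq⟩ := reach q
  obtain ⟨g, hg, hgpq⟩ := htrans p.2 q.2
  obtain ⟨G, hG, hGk⟩ := lift g hg
  refine ⟨Q * G * P⁻¹, mul_mem (mul_mem hQ hG) (inv_mem hP), ?_⟩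
  have hinv : P⁻¹ p = (0, p.2) := by
    apply_fun P
    rw [← Equiv.Perm.mul_apply, mul_inv_cancel, Equiv.Perm.one_apply, hPp]
  show Q (G (P⁻¹ p)) = q
  rw [hinv, hGk, hgpq, hQq]
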